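/- Let A be an n×n Hermitian matrix, and let S be the n×m normalized characteristic matrix of an equitable partition of A with quotient matrix B = SᵀAS. Then exp(-iBt) = Sᵀ exp(-iAt) S for all real t. -/

import Mathlib

open Matrix Finset

/-- Powers of the quotient: if `SᵀS = 1` and `A` commutes with `SSᵀ`, then
`(SᵀAS)^k = Sᵀ A^k S`. -/
lemma quot_pow {n m : ℕ} (A : Matrix (Fin n) (Fin n) ℂ) (S : Matrix (Fin n) (Fin m) ℂ)
    (h1 : S.transpose * S = 1)
    (h2 : A * (S * S.transpose) = (S * S.transpose) * A) (k : ℕ) :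
    (S.transpose * A * S) ^ k = S.transpose * A ^ k * S := by
  induction k with
  | zero => rw [pow_zero, pow_zero, Matrix.mul_one, h1]
  | succ k ih =>
    have hc : (Commute A (S * S.transpose)) := h2
    have hk : A ^ k * (S * S.transpose) = (S * S.transpose) * A ^ k := (hc.pow_left k)
    rw [pow_succ, ih]
    calc S.transpose * A ^ k * S * (S.transpose * A * S)
        = S.transpose * ((A ^ k * (S * S.transpose)) * (A * S)) := by
          simp only [Matrix.mul_assoc]
      _ = S.transpose * (((S * S.transpose) * A ^ k) * (A * S)) := by rw [hk]
      _ = (S.transpose * S) * (S.transpose * (A ^ k * (A * S))) := by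
          simp only [Matrix.mul_assoc]
      _ = S.transpose * A ^ (k + 1) * S := by
          rw [h1, Matrix.one_mul]
          simp only [pow_succ, Matrix.mul_assoc]

/-- for an equitable partition of a Hermitian matrix `A` with normalized
characteristic matrix `S` and quotient `B = SᵀAS`, we have `exp(-iBt) = Sᵀ exp(-iAt) S`.
The partition is encoded by the cell-assignment map `f`. -/
theorem stmt7 {n m : ℕ} (A : Matrix (Fin n) (Fin n) ℂ) (hA : A.IsHermitian)
    (f : Fin n → Fin m) (hf : Function.Surjective f)
    (S : Matrix (Fin n) (Fin m) ℂ)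
    (hS : ∀ j k, S j k =
      if f j = k then ((1 / Real.sqrt ((univ.filter fun x => f x = k).card) : ℝ) : ℂ) else 0)
    (r c : Fin m → Fin m → ℂ)
    (hr : ∀ j k, ∀ x : Fin n, f x = j → ∑ y ∈ univ.filter (fun y => f y = k), A x y = r j k)
    (hc : ∀ j k, ∀ y : Fin n, f y = k → ∑ x ∈ univ.filter (fun x => f x = j), A x y = c j k)
    (t : ℝ) :
    NormedSpace.exp ((-(Complex.I * (t : ℂ))) • (S.transpose * A * S)) =
      S.transpose * NormedSpace.exp ((-(Complex.I * (t : ℂ))) • A) * S := by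
  classical
  -- notation
  set N : Fin m → ℕ := fun k => (univ.filter fun x => f x = k).card with hN
  set w : Fin m → ℂ := fun k => ((1 / Real.sqrt (N k) : ℝ) : ℂ) with hw
  have hNpos : ∀ k, 0 < N k := by
    intro k
    obtain ⟨x, hx⟩ := hf k
    exact Finset.card_pos.mpr ⟨x, by simp [hx]⟩
  have hNne : ∀ k, ((N k : ℂ)) ≠ 0 := by
    intro k
    exact_mod_cast Nat.cast_ne_zero.mpr (hNpos k).ne'
  have hww : ∀ k, w k * w k = 1 / (N k : ℂ) := by
    intro k
    have h0 : (0:ℝ) ≤ (N k : ℝ) := Nat.cast_nonneg _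
    have : (1 / Real.sqrt (N k) : ℝ) * (1 / Real.sqrt (N k) : ℝ) = 1 / (N k : ℝ) := by
      rw [div_mul_div_comm, one_mul, Real.mul_self_sqrt h0]
    simp only [hw, ← Complex.ofReal_mul, this]
    push_cast
    ring
  have hS' : ∀ j k, S j k = if f j = k then w k else 0 := by
    intro j k; rw [hS j k]
  -- SᵀS = 1
  have h1 : S.transpose * S = 1 := by
    ext j k
    rw [Matrix.mul_apply]
    by_cases hjk : j = k
    · subst hjk
      have : ∀ x : Fin n, S.transpose j x * S x j = if f x = j then w j * w j else 0 := by
        intro x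
        simp only [Matrix.transpose_apply, hS']
        by_cases h : f x = j <;> simp [h]
      rw [Finset.sum_congr rfl fun x _ => this x]
      rw [← Finset.sum_filter, Finset.sum_const]
      rw [hww j, Matrix.one_apply_eq, nsmul_eq_mul]
      have hcast : ((univ.filter fun x => f x = j).card : ℂ) = (N j : ℂ) := rfl
      rw [hcast, mul_one_div, div_self (hNne j)]
    · have : ∀ x : Fin n, S.transpose j x * S x k = 0 := by
        intro x
        simp only [Matrix.transpose_apply, hS']
        by_cases h : f x = j
        · have hxk : f x ≠ k := fun hh => hjk ((h.symm.trans hh))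
          rw [if_pos h, if_neg hxk, mul_zero]
        · rw [if_neg h, zero_mul]
      rw [Finset.sum_congr rfl fun x _ => this x]
      simp [Matrix.one_apply_ne hjk]
  -- entries of P = S Sᵀ
  have hP : ∀ x y, (S * S.transpose) x y =
      if f x = f y then (1 / (N (f y) : ℂ)) else 0 := by
    intro x y
    rw [Matrix.mul_apply]
    rw [Finset.sum_eq_single (f x)]
    · simp only [Matrix.transpose_apply]
      rw [hS' x (f x), hS' y (f x), if_pos rfl]
      by_cases h : f y = f x
      · rw [if_pos h, if_pos h.symm, ← h, hww]
      · rw [if_neg h, if_neg fun hh => h hh.symm, mul_zero]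
    · intro b _ hb
      simp only [Matrix.transpose_apply]
      rw [hS' x b, if_neg fun hh => hb hh.symm, zero_mul]
    · intro h; exact absurd (Finset.mem_univ _) h
  have hP' : ∀ x y, (S * S.transpose) x y =
      if f x = f y then (1 / (N (f x) : ℂ)) else 0 := by
    intro x y
    rw [hP x y]
    by_cases h : f x = f y <;> simp [h]
  -- double counting: N j * r j k = N k * c j k
  have key : ∀ j k, (N j : ℂ) * r j k = (N k : ℂ) * c j k := by
    intro j k
    have e1 : ∑ x ∈ univ.filter (fun x => f x = j),
        ∑ y ∈ univ.filter (fun y => f y = k), A x y = (N j : ℂ) * r j k := by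
      rw [Finset.sum_congr rfl fun x hx => hr j k x (by simpa using hx)]
      rw [Finset.sum_const, nsmul_eq_mul]
    have e2 : ∑ x ∈ univ.filter (fun x => f x = j),
        ∑ y ∈ univ.filter (fun y => f y = k), A x y = (N k : ℂ) * c j k := by
      refine Finset.sum_comm.trans ?_
      rw [Finset.sum_congr rfl fun y hy => hc j k y (by simpa using hy)]
      rw [Finset.sum_const, nsmul_eq_mul]
    rw [← e1, e2]
  -- A commutes with P
  have h2 : A * (S * S.transpose) = (S * S.transpose) * A := by
    ext x y
    rw [Matrix.mul_apply, Matrix.mul_apply]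
    have eL : ∑ z, A x z * (S * S.transpose) z y
        = r (f x) (f y) * (1 / (N (f y) : ℂ)) := by
      have : ∀ z, A x z * (S * S.transpose) z y
          = if f z = f y then A x z * (1 / (N (f y) : ℂ)) else 0 := by
        intro z
        rw [hP z y]
        by_cases h : f z = f y <;> simp [h]
      rw [Finset.sum_congr rfl fun z _ => this z, ← Finset.sum_filter,
        ← Finset.sum_mul, hr (f x) (f y) x rfl]
    have eR : ∑ z, (S * S.transpose) x z * A z y
        = (1 / (N (f x) : ℂ)) * c (f x) (f y) := by
      have : ∀ z, (S * S.transpose) x z * A z y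
          = if f z = f x then (1 / (N (f x) : ℂ)) * A z y else 0 := by
        intro z
        rw [hP' x z]
        by_cases h : f z = f x
        · rw [if_pos h.symm, if_pos h]
        · rw [if_neg fun hh => h hh.symm, if_neg h, zero_mul]
      rw [Finset.sum_congr rfl fun z _ => this z, ← Finset.sum_filter,
        ← Finset.mul_sum, hc (f x) (f y) y rfl]
    rw [eL, eR]
    have hk := key (f x) (f y)
    have hx0 := hNne (f x)
    have hy0 := hNne (f y)
    field_simp
    linear_combination hk
  -- powers of the scaled quotient
  set z : ℂ := -(Complex.I * (t : ℂ)) with hz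
  have hpow : ∀ k : ℕ, (z • (S.transpose * A * S)) ^ k
      = S.transpose * (z • A) ^ k * S := by
    intro k
    rw [smul_pow, smul_pow, quot_pow A S h1 h2 k, Matrix.mul_smul, Matrix.smul_mul]
  -- summability of the exponential series for z • A
  have hsum : Summable (fun k : ℕ => (k.factorial⁻¹ : ℂ) • (z • A) ^ k) := by
    letI : SeminormedRing (Matrix (Fin n) (Fin n) ℂ) := Matrix.linftyOpSemiNormedRing
    letI : NormedRing (Matrix (Fin n) (Fin n) ℂ) := Matrix.linftyOpNormedRing
    letI : NormedAlgebra ℂ (Matrix (Fin n) (Fin n) ℂ) := Matrix.linftyOpNormedAlgebra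
    exact NormedSpace.expSeries_summable' (𝕂 := ℂ) (z • A)
  -- the continuous linear map X ↦ Sᵀ X S
  let L : Matrix (Fin n) (Fin n) ℂ →ₗ[ℂ] Matrix (Fin m) (Fin m) ℂ :=
    { toFun := fun X => S.transpose * X * S
      map_add' := fun X Y => by
        show S.transpose * (X + Y) * S = S.transpose * X * S + S.transpose * Y * S
        rw [Matrix.mul_add, Matrix.add_mul]
      map_smul' := fun a X => by
        show S.transpose * (a • X) * S = a • (S.transpose * X * S)
        rw [Matrix.mul_smul, Matrix.smul_mul] }
  have hL : Continuous L := L.continuous_of_finiteDimensional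
  have hmap := ((hsum.hasSum.map L.toAddMonoidHom hL).tsum_eq)
  simp only [NormedSpace.exp_eq_tsum ℂ]
  calc ∑' k : ℕ, (k.factorial⁻¹ : ℂ) • (z • (S.transpose * A * S)) ^ k
      = ∑' k : ℕ, L ((k.factorial⁻¹ : ℂ) • (z • A) ^ k) := by
        refine tsum_congr fun k => ?_
        show _ = S.transpose * ((k.factorial⁻¹ : ℂ) • (z • A) ^ k) * S
        rw [hpow k, Matrix.mul_smul, Matrix.smul_mul]
    _ = S.transpose * (∑' k : ℕ, (k.factorial⁻¹ : ℂ) • (z • A) ^ k) * S := hmap
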